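/- Let A be the n×n nilpotent Jordan-type matrix with ones on the superdiagonal and zeros elsewhere (the higher-order integrator matrix). If γ is an orthogonal n×n matrix commuting with A, then γ = I_n or γ = −I_n. -/
import Mathlib


open Matrix

/-- If `γ` is an orthogonal matrix commuting with the nilpotent higher-order
integrator matrix `A` (ones on the superdiagonal, zeros elsewhere), then
`γ = I` or `γ = -I`. -/
theorem stmt_6 {n : ℕ} (A γ : Matrix (Fin n) (Fin n) ℝ)
    (hA : ∀ i j : Fin n, A i j = if (i : ℕ) + 1 = (j : ℕ) then 1 else 0)
    (hγ : γᵀ * γ = 1) (hcomm : A * γ = γ * A) :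
    γ = 1 ∨ γ = -1 := by
  rcases Nat.eq_zero_or_pos n with hn | hn
  · left; subst hn; ext i; exact i.elim0
  set z : Fin n := ⟨0, hn⟩ with hz
  have hzv : (z : ℕ) = 0 := rfl
  have hAmul : ∀ (i j : Fin n) (h : (i:ℕ)+1 < n), (A*γ) i j = γ ⟨(i:ℕ)+1, h⟩ j := by
    intro i j h
    rw [mul_apply, Finset.sum_eq_single (⟨(i:ℕ)+1, h⟩ : Fin n)]
    · rw [hA]; simp
    · intro k _ hk
      rw [hA, if_neg, zero_mul]
      intro he; exact hk (Fin.ext he.symm)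
    · simp
  have hgA0 : ∀ i : Fin n, (γ*A) i z = 0 := by
    intro i
    rw [mul_apply]
    apply Finset.sum_eq_zero
    intro k _
    rw [hA]
    simp [hzv]
  have hgAs : ∀ (i j : Fin n) (h : (j:ℕ)+1 < n), (γ*A) i ⟨(j:ℕ)+1, h⟩ = γ i j := by
    intro i j h
    rw [mul_apply, Finset.sum_eq_single j]
    · rw [hA]; simp
    · intro k _ hk
      rw [hA, if_neg, mul_zero]
      intro he
      exact hk (Fin.ext (by simpa using he))
    · simp
  have E1 : ∀ i : Fin n, 0 < (i:ℕ) → γ i z = 0 := by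
    intro i hi
    have h' : ((i:ℕ)-1)+1 < n := by omega
    have hieq : i = ⟨((i:ℕ)-1)+1, h'⟩ := Fin.ext (by simp; omega)
    rw [hieq, ← hAmul ⟨(i:ℕ)-1, by omega⟩ z h', hcomm, hgA0]
  have E2 : ∀ (i j : Fin n) (hi : (i:ℕ)+1 < n) (hj : (j:ℕ)+1 < n),
      γ ⟨(i:ℕ)+1, hi⟩ ⟨(j:ℕ)+1, hj⟩ = γ i j := by
    intro i j hi hj
    rw [← hAmul i ⟨(j:ℕ)+1, hj⟩ hi, hcomm, hgAs]
  set g : ℕ → ℝ := fun k => if h : k < n then γ z ⟨k, h⟩ else 0 with hg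
  have P : ∀ m : ℕ, ∀ i j : Fin n, (i:ℕ) = m →
      γ i j = if (i:ℕ) ≤ (j:ℕ) then g ((j:ℕ) - (i:ℕ)) else 0 := by
    intro m
    induction m with
    | zero =>
      intro i j hi
      have hiz : i = z := Fin.ext hi
      subst hiz
      rw [if_pos (by omega)]
      simp [hg, hzv, j.isLt]
    | succ m ih =>
      intro i j hiv
      have hi' : m+1 < n := hiv ▸ i.isLt
      have hieq : i = ⟨m+1, hi'⟩ := Fin.ext hiv
      rcases Nat.eq_zero_or_pos (j:ℕ) with hj0 | hjp
      · have hjz : j = z := Fin.ext (by rw [hj0, hzv])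
        subst hjz
        rw [E1 i (by omega), if_neg (by omega)]
      · have hj' : ((j:ℕ)-1)+1 < n := by omega
        have hjeq : j = ⟨((j:ℕ)-1)+1, hj'⟩ := Fin.ext (by simp; omega)
        rw [hieq, hjeq, E2 ⟨m, by omega⟩ ⟨(j:ℕ)-1, by omega⟩ hi' hj',
          ih ⟨m, by omega⟩ ⟨(j:ℕ)-1, by omega⟩ rfl]
        simp only [Fin.val_mk] at *
        by_cases hle : m ≤ (j:ℕ)-1
        · rw [if_pos hle, if_pos (by omega)]
          congr 1
          omega
        · rw [if_neg hle, if_neg (by omega)]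
  have Pcol : ∀ k : Fin n, γ k z = if k = z then g 0 else 0 := by
    intro k
    rw [P (k:ℕ) k z rfl]
    by_cases hk : k = z
    · subst hk; simp [hzv]
    · have hkpos : 0 < (k:ℕ) := Nat.pos_of_ne_zero (fun h => hk (Fin.ext (by rw [h, hzv])))
      rw [if_neg (by omega), if_neg hk]
  have horth : ∀ j : Fin n, g 0 * γ z j = (1 : Matrix (Fin n) (Fin n) ℝ) z j := by
    intro j
    rw [← hγ, mul_apply, Finset.sum_eq_single z]
    · rw [transpose_apply, Pcol, if_pos rfl]
    · intro k _ hk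
      rw [transpose_apply, Pcol, if_neg hk, zero_mul]
    · simp
  have hgz : γ z z = g 0 := by
    have hn0 : 0 < n := hn
    simp only [hg]
    rw [dif_pos hn0]
  have hc : g 0 * g 0 = 1 := by
    have := horth z
    rwa [hgz, one_apply_eq] at this
  have hg0ne : g 0 ≠ 0 := by
    intro h0; rw [h0, zero_mul] at hc; norm_num at hc
  have hg1 : ∀ j : Fin n, j ≠ z → γ z j = 0 := by
    intro j hj
    have := horth j
    rw [one_apply_ne (Ne.symm hj)] at this
    rcases mul_eq_zero.mp this with h | h
    · exact absurd h hg0ne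
    · exact h
  have hgk : ∀ k : ℕ, 0 < k → g k = 0 := by
    intro k hk
    by_cases h : k < n
    · have hgkk : g k = γ z ⟨k, h⟩ := by simp [hg, h]
      rw [hgkk]
      apply hg1
      intro he
      have : k = 0 := by
        have := congrArg Fin.val he
        simpa [hzv] using this
      omega
    · simp [hg, h]
  have hfinal : ∀ i j : Fin n, γ i j = if i = j then g 0 else 0 := by
    intro i j
    rw [P (i:ℕ) i j rfl]
    by_cases hij : i = j
    · subst hij; simp
    · rw [if_neg hij]
      by_cases hle : (i:ℕ) ≤ (j:ℕ)
      · rw [if_pos hle, hgk]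
        have : (i:ℕ) ≠ (j:ℕ) := fun h => hij (Fin.ext h)
        omega
      · rw [if_neg hle]
  rcases mul_self_eq_one_iff.mp hc with h1 | h1
  · left
    ext i j
    rw [hfinal, one_apply]
    by_cases h : i = j <;> simp [h, h1]
  · right
    ext i j
    rw [hfinal]
    by_cases h : i = j <;> simp [h, h1, one_apply]
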